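/- Let Z*= Σ_{k=1}^K l_k U_k U_kᵀ be the membership matrix of a partition of {1,…,n} into communities C₁,…,C_K of sizes l_k, where U_k is the unit vector with entries 1/√l_k on C_k and 0 elsewhere, and let P⊥(M) = (I − UUᵀ)M(I − UUᵀ) with U = [U₁,…,U_K]. Then for every Z ∈ C = {Z ⪰ 0, Z_{ij} ∈ [0,1], Z_{ii} = 1}: P⊥(Z) ⪰ 0, its nuclear norm equals its trace, and Tr(P⊥(Z)) = Σ_k (1/l_k) Σ_{i,j ∈ C_k} |Z*_{ij} − Z_{ij}| ≤ (max_k 1/l_k)·‖Z − Z*‖₁. -/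

import Mathlib

open Finset Matrix

/-- nuclear norm of a real square matrix: sum of its singular values, i.e. the sum of
the square roots of the eigenvalues of MᵀM. -/
noncomputable def nuclearNorm {n : ℕ} (M : Matrix (Fin n) (Fin n) ℝ) : ℝ :=
  ∑ i, Real.sqrt ((show (Mᵀ * M).IsHermitian by
    simpa [Matrix.conjTranspose_eq_transpose_of_trivial] using
      Matrix.isHermitian_conjTranspose_mul_self M).eigenvalues i)

open scoped MatrixOrder in
theorem stmt14_trace_sqrt {n : ℕ} {A : Matrix (Fin n) (Fin n) ℝ} (hA : A.PosSemidef) :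
    Matrix.trace (CFC.sqrt A) = ∑ i, Real.sqrt (hA.1.eigenvalues i) := by
  rw [CFC.sqrt_eq_real_sqrt A hA.nonneg, cfcₙ_eq_cfc, hA.1.cfc_eq, Matrix.IsHermitian.cfc,
    Unitary.conjStarAlgAut_apply, Matrix.trace_mul_cycle,
    Unitary.coe_star_mul_self hA.1.eigenvectorUnitary]
  simp [Matrix.trace_diagonal]

open scoped MatrixOrder in
theorem stmt14_nuc_eq_trace {n : ℕ} {M : Matrix (Fin n) (Fin n) ℝ} (hM : M.PosSemidef) :
    nuclearNorm M = Matrix.trace M := by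
  have ht : Mᵀ = M := Matrix.IsSymm.eq (by simpa using hM.1)
  have hA : (Mᵀ * M).PosSemidef := by
    have := Matrix.posSemidef_conjTranspose_mul_self M
    simpa using this
  have hMs : M = CFC.sqrt (Mᵀ * M) := by rw [ht, CFC.sqrt_mul_self M hM.nonneg]
  rw [nuclearNorm, show Matrix.trace M = Matrix.trace (CFC.sqrt (Mᵀ * M)) from by rw [← hMs],
    stmt14_trace_sqrt hA]

theorem stmt_14 {n K : ℕ} (c : Fin n → Fin K) (hcsurj : Function.Surjective c)
    (l : Fin K → ℕ) (hl : ∀ k, l k = (Finset.univ.filter fun i => c i = k).card)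
    (Zstar : Matrix (Fin n) (Fin n) ℝ)
    (hZstar : ∀ i j, Zstar i j = if c i = c j then 1 else 0)
    (UU : Matrix (Fin n) (Fin n) ℝ)
    (hUU : ∀ i j, UU i j = if c i = c j then 1 / (l (c i) : ℝ) else 0)
    (Z : Matrix (Fin n) (Fin n) ℝ)
    (hZpsd : Z.PosSemidef)
    (hZbox : ∀ i j, Z i j ∈ Set.Icc (0:ℝ) 1)
    (hZdiag : ∀ i, Z i i = 1)
    (Pperp : Matrix (Fin n) (Fin n) ℝ)
    (hPperp : Pperp = (1 - UU) * Z * (1 - UU)) :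
    Pperp.PosSemidef ∧
      nuclearNorm Pperp = Matrix.trace Pperp ∧
      Matrix.trace Pperp =
        ∑ k, (1 / (l k : ℝ)) *
          ∑ i ∈ Finset.univ.filter (fun i => c i = k),
            ∑ j ∈ Finset.univ.filter (fun j => c j = k), |Zstar i j - Z i j| ∧
      Matrix.trace Pperp ≤
        (⨆ k, 1 / (l k : ℝ)) * ∑ i, ∑ j, |Z i j - Zstar i j| := by
  -- basic facts
  have hlpos : ∀ k, 0 < l k := by
    intro k
    obtain ⟨i, hi⟩ := hcsurj k
    rw [hl]
    exact Finset.card_pos.mpr ⟨i, by simp [hi]⟩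
  have hUUt : UUᴴ = UU := by
    ext i j
    simp only [Matrix.conjTranspose_apply, star_trivial]
    rw [hUU, hUU]
    by_cases h : c i = c j
    · rw [if_pos h.symm, if_pos h, h]
    · rw [if_neg (fun hh => h hh.symm), if_neg h]
  have hUUsymm : ((1 : Matrix (Fin n) (Fin n) ℝ) - UU)ᴴ = 1 - UU := by
    rw [Matrix.conjTranspose_sub, hUUt, Matrix.conjTranspose_one]
  -- PSD
  have hpsd : Pperp.PosSemidef := by
    have := hZpsd.mul_mul_conjTranspose_same (B := (1 : Matrix (Fin n) (Fin n) ℝ) - UU)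
    rw [hUUsymm] at this
    rwa [hPperp]
  -- UU is idempotent
  have hUUidem : UU * UU = UU := by
    ext i j
    rw [Matrix.mul_apply, hUU]
    by_cases h : c i = c j
    · have hterm : ∀ m, UU i m * UU m j
          = if c m = c i then (1 / (l (c i) : ℝ)) * (1 / (l (c i) : ℝ)) else 0 := by
        intro m
        rw [hUU, hUU]
        by_cases hm : c m = c i
        · rw [if_pos hm.symm, if_pos (hm.trans h), if_pos hm, hm]
        · rw [if_neg (fun hh => hm hh.symm), if_neg (fun hh => hm (hh.trans h.symm)),
            if_neg hm, zero_mul]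
      simp_rw [hterm]
      rw [← Finset.sum_filter, Finset.sum_const, ← hl, nsmul_eq_mul, if_pos h]
      have h0 : ((l (c i) : ℝ)) ≠ 0 := Nat.cast_ne_zero.mpr (hlpos _).ne'
      field_simp
    · rw [if_neg h]
      apply Finset.sum_eq_zero
      intro m _
      rw [hUU, hUU]
      by_cases hm : c i = c m
      · rw [if_neg (fun hh => h (hm.trans hh)), mul_zero]
      · rw [if_neg hm, zero_mul]
  -- trace identity
  have hexp : (1 - UU) * Z * (1 - UU) = Z - UU * Z - Z * UU + UU * Z * UU := by
    noncomm_ring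
  have htr : Matrix.trace Pperp = Matrix.trace Z - Matrix.trace (Z * UU) := by
    rw [hPperp, hexp, Matrix.trace_add, Matrix.trace_sub, Matrix.trace_sub,
      Matrix.trace_mul_cycle UU Z UU, hUUidem, Matrix.trace_mul_comm UU Z]
    ring
  have htrZ : Matrix.trace Z = (n : ℝ) := by
    simp [Matrix.trace, Matrix.diag, hZdiag]
  set S : Fin K → ℝ := fun k => ∑ i ∈ Finset.univ.filter (fun i => c i = k),
      ∑ j ∈ Finset.univ.filter (fun j => c j = k), Z i j with hS
  have htrZUU : Matrix.trace (Z * UU) = ∑ k, (1 / (l k : ℝ)) * S k := by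
    have h1 : Matrix.trace (Z * UU) = ∑ i, ∑ j, Z i j * UU j i := by
      simp [Matrix.trace, Matrix.diag, Matrix.mul_apply]
    rw [h1, ← Finset.sum_fiberwise Finset.univ c (fun i => ∑ j, Z i j * UU j i)]
    refine Finset.sum_congr rfl fun k _ => ?_
    rw [hS, Finset.mul_sum]
    refine Finset.sum_congr rfl fun i hi => ?_
    have hik : c i = k := (Finset.mem_filter.mp hi).2
    rw [Finset.mul_sum, Finset.sum_filter]
    refine Finset.sum_congr rfl fun j _ => ?_
    rw [hUU]
    by_cases hj : c j = k
    · rw [if_pos (hj.trans hik.symm), if_pos hj, hj]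
      ring
    · rw [if_neg (fun hh => hj (hh.trans hik)), if_neg hj, mul_zero]
  have hsuml : ∑ k, (l k : ℝ) = (n : ℝ) := by
    have := Finset.card_eq_sum_card_fiberwise
      (f := c) (s := Finset.univ) (t := Finset.univ) (fun x _ => Finset.mem_univ _)
    simp_rw [hl]
    exact_mod_cast congrArg (Nat.cast : ℕ → ℝ) (by simpa using this.symm)
  have hRHS : ∀ k, (1 / (l k : ℝ)) *
      (∑ i ∈ Finset.univ.filter (fun i => c i = k),
        ∑ j ∈ Finset.univ.filter (fun j => c j = k), |Zstar i j - Z i j|)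
      = (l k : ℝ) - (1 / (l k : ℝ)) * S k := by
    intro k
    have habs : ∀ i ∈ Finset.univ.filter (fun i => c i = k),
        ∀ j ∈ Finset.univ.filter (fun j => c j = k), |Zstar i j - Z i j| = 1 - Z i j := by
      intro i hi j hj
      have hik : c i = k := (Finset.mem_filter.mp hi).2
      have hjk : c j = k := (Finset.mem_filter.mp hj).2
      rw [hZstar, if_pos (hik.trans hjk.symm), abs_of_nonneg (by linarith [(hZbox i j).2])]
    have hmain : (∑ i ∈ Finset.univ.filter (fun i => c i = k),
        ∑ j ∈ Finset.univ.filter (fun j => c j = k), |Zstar i j - Z i j|)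
        = (l k : ℝ) * (l k : ℝ) - S k := by
      rw [Finset.sum_congr rfl (fun i hi => Finset.sum_congr rfl (fun j hj => habs i hi j hj))]
      rw [hS]
      simp only [Finset.sum_sub_distrib, Finset.sum_const, nsmul_eq_mul, mul_one, ← hl]
    rw [hmain]
    have h0 : ((l k : ℝ)) ≠ 0 := Nat.cast_ne_zero.mpr (hlpos k).ne'
    field_simp
  have htraceEq : Matrix.trace Pperp =
      ∑ k, (1 / (l k : ℝ)) *
        ∑ i ∈ Finset.univ.filter (fun i => c i = k),
          ∑ j ∈ Finset.univ.filter (fun j => c j = k), |Zstar i j - Z i j| := by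
    rw [htr, htrZ, htrZUU, Finset.sum_congr rfl (fun k _ => hRHS k),
      Finset.sum_sub_distrib, hsuml]
  -- final inequality
  set A : Fin K → ℝ := fun k => ∑ i ∈ Finset.univ.filter (fun i => c i = k),
      ∑ j ∈ Finset.univ.filter (fun j => c j = k), |Zstar i j - Z i j| with hA
  have hAnonneg : ∀ k, 0 ≤ A k :=
    fun k => Finset.sum_nonneg fun i _ => Finset.sum_nonneg fun j _ => abs_nonneg _
  set T : ℝ := ⨆ k, 1 / (l k : ℝ) with hT
  have hTk : ∀ k, 1 / (l k : ℝ) ≤ T :=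
    fun k => le_ciSup (f := fun k => 1 / (l k : ℝ)) (Set.Finite.bddAbove (Set.finite_range _)) k
  have hT0 : 0 ≤ T := by
    rcases isEmpty_or_nonempty (Fin K) with hK | hK
    · rw [hT, Real.iSup_of_isEmpty]
    · exact le_trans (by positivity) (hTk (Classical.arbitrary _))
  have hblock : ∑ k, A k ≤ ∑ i, ∑ j, |Z i j - Zstar i j| := by
    have h1 : ∑ k, A k = ∑ i, ∑ j ∈ Finset.univ.filter (fun j => c j = c i),
        |Z i j - Zstar i j| := by
      rw [← Finset.sum_fiberwise Finset.univ c
        (fun i => ∑ j ∈ Finset.univ.filter (fun j => c j = c i), |Z i j - Zstar i j|)]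
      refine Finset.sum_congr rfl fun k _ => ?_
      rw [hA]
      refine Finset.sum_congr rfl fun i hi => ?_
      have hik : c i = k := (Finset.mem_filter.mp hi).2
      rw [hik]
      exact Finset.sum_congr rfl fun j _ => abs_sub_comm _ _
    rw [h1]
    refine Finset.sum_le_sum fun i _ => ?_
    exact Finset.sum_le_sum_of_subset_of_nonneg (Finset.filter_subset _ _)
      (fun j _ _ => abs_nonneg _)
  have hfinal : Matrix.trace Pperp ≤ T * ∑ i, ∑ j, |Z i j - Zstar i j| := by
    rw [htraceEq]
    calc ∑ k, (1 / (l k : ℝ)) * A k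
        ≤ ∑ k, T * A k :=
          Finset.sum_le_sum fun k _ => mul_le_mul_of_nonneg_right (hTk k) (hAnonneg k)
      _ = T * ∑ k, A k := (Finset.mul_sum _ _ _).symm
      _ ≤ T * ∑ i, ∑ j, |Z i j - Zstar i j| := mul_le_mul_of_nonneg_left hblock hT0
  exact ⟨hpsd, stmt14_nuc_eq_trace hpsd, htraceEq, hfinal⟩
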